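/- For every N ≥ 2 and every monomial M(u) = u_1^{n_1} ⋯ u_k^{n_k} with n_i ≥ 1 and Σ n_i = N, there exist a probability vector (p_1,…,p_k) and polynomials d_{i,j}(u) of degree N−2 with nonpositive coefficients such that M(u) = Σ_{i=1}^k p_i u_i^N + Σ_{1≤i<j≤k} d_{i,j}(u)(u_i − u_j)² for all real u_1,…,u_k. -/

import Mathlib

open Finset MvPolynomial


private lemma tele (K : ℕ) (t : ℕ → ℝ) (h0 : t 0 = 0) (hK : t (K+1) = 0) (x y : ℝ) :
    ∑ m ∈ range (K+1), (t m - t (m+1)) * x^m * y^(K-m)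
      = (x - y) * ∑ m ∈ range K, t (m+1) * x^m * y^(K-1-m) := by
  have h1 : ∀ m ∈ range K, (x - y) * (t (m+1) * x^m * y^(K-1-m))
      = t (m+1) * x^(m+1) * y^(K-(m+1)) - t (m+1) * x^m * y^(K-m) := by
    intro m hm
    rw [mem_range] at hm
    have e1 : K - m = (K - 1 - m) + 1 := by omega
    have e2 : K - (m+1) = K - 1 - m := by omega
    rw [e1, e2]; ring
  rw [mul_sum, Finset.sum_congr rfl h1, Finset.sum_sub_distrib]
  have h2 : ∑ m ∈ range K, t (m+1) * x^(m+1) * y^(K-(m+1))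
      = (∑ m ∈ range (K+1), t m * x^m * y^(K-m)) - t 0 * x^0 * y^(K-0) := by
    rw [Finset.sum_range_succ' (fun m => t m * x^m * y^(K-m)) K]; ring
  have h3 : ∑ m ∈ range (K+1), (t m - t (m+1)) * x^m * y^(K-m)
      = (∑ m ∈ range (K+1), t m * x^m * y^(K-m))
        - ((∑ m ∈ range K, t (m+1) * x^m * y^(K-m)) + t (K+1) * x^K * y^(K-K)) := by
    rw [← Finset.sum_range_succ (fun m => t (m+1) * x^m * y^(K-m)) K, ← Finset.sum_sub_distrib]
    exact Finset.sum_congr rfl fun m _ => by ring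
  rw [h3, h2, h0, hK]; ring

/-- coefficients of the quotient polynomial -/
noncomputable def qc (a b m : ℕ) : ℝ := if m < a then (b:ℝ)*(m+1) else (a:ℝ)*((a+b-1-m : ℕ):ℝ)

lemma qc_nonneg (a b m : ℕ) : 0 ≤ qc a b m := by
  unfold qc; split <;> positivity

private lemma two_var (a b : ℕ) (ha : 1 ≤ a) (hb : 1 ≤ b) (x y : ℝ) :
    (a:ℝ) * x^(a+b) + (b:ℝ) * y^(a+b) - ((a+b : ℕ):ℝ) * x^a * y^b
      = (x-y)^2 * ∑ m ∈ range (a+b-1), qc a b m * x^m * y^(a+b-2-m) := by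
  set N := a + b with hNdef
  have hN : 2 ≤ N := by omega
  set g : ℕ → ℝ := fun m => if m < a then -(b:ℝ) else (a:ℝ) with hg
  have gsum : ∀ m₁, m₁ ≤ a → ∑ l ∈ Ico m₁ N, g l
      = ((a - m₁ : ℕ):ℝ) * (-(b:ℝ)) + (b:ℝ) * (a:ℝ) := by
    intro m₁ hm₁
    have e1 : ∑ l ∈ Ico m₁ a, g l = ((a - m₁ : ℕ):ℝ) * (-(b:ℝ)) := by
      have h : ∀ l ∈ Ico m₁ a, g l = -(b:ℝ) := fun l hl => if_pos (mem_Ico.mp hl).2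
      rw [Finset.sum_congr rfl h, Finset.sum_const, Nat.card_Ico, nsmul_eq_mul]
    have e2 : ∑ l ∈ Ico a N, g l = (b:ℝ) * (a:ℝ) := by
      have h : ∀ l ∈ Ico a N, g l = (a:ℝ) := fun l hl =>
        if_neg (Nat.not_lt.mpr (mem_Ico.mp hl).1)
      rw [Finset.sum_congr rfl h, Finset.sum_const, Nat.card_Ico, nsmul_eq_mul]
      have : (N - a:ℕ) = b := by omega
      rw [this]
    rw [← Finset.sum_Ico_consecutive _ hm₁ (by omega : a ≤ N), e1, e2]
  have gsum2 : ∀ m₁, a ≤ m₁ → ∑ l ∈ Ico m₁ N, g l = ((N - m₁ : ℕ):ℝ) * (a:ℝ) := by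
    intro m₁ hm₁
    have h : ∀ l ∈ Ico m₁ N, g l = (a:ℝ) := fun l hl =>
      if_neg (Nat.not_lt.mpr (le_trans hm₁ (mem_Ico.mp hl).1))
    rw [Finset.sum_congr rfl h, Finset.sum_const, Nat.card_Ico, nsmul_eq_mul]
  set t1 : ℕ → ℝ := fun m => ∑ l ∈ Ico m N, g l with ht1
  have ht1step : ∀ m, m < N → t1 m - t1 (m+1) = g m := by
    intro m hm
    have h : t1 m = g m + t1 (m+1) := Finset.sum_eq_sum_Ico_succ_bot hm g
    rw [h]; ring
  have ht10 : t1 0 = 0 := by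
    have := gsum 0 (Nat.zero_le a)
    simp only [Nat.sub_zero] at this
    rw [ht1]; simp only []; rw [this]; ring
  have ht1N : t1 ((N-1)+1) = 0 := by
    have : (N-1)+1 = N := by omega
    rw [ht1]; simp only []; rw [this, Finset.Ico_self, Finset.sum_empty]
  have ht1q : ∀ m, m < N - 1 → t1 (m+1) = qc a b m := by
    intro m hm
    unfold qc
    by_cases hma : m < a
    · rw [if_pos hma, ht1]; simp only []
      rw [gsum (m+1) (by omega)]
      have c1 : ((a - (m+1) : ℕ) : ℝ) = (a:ℝ) - (m:ℝ) - 1 := by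
        rw [Nat.cast_sub (by omega : m+1 ≤ a)]; push_cast; ring
      rw [c1]; push_cast; ring
    · rw [if_neg hma, ht1]; simp only []
      rw [gsum2 (m+1) (by omega)]
      have : N - (m+1) = a + b - 1 - m := by omega
      rw [this]; ring
  -- second division: G = (x-y) * Q
  have claim2 : ∑ m ∈ range N, g m * x^m * y^(N-1-m)
      = (x - y) * ∑ m ∈ range (N-1), qc a b m * x^m * y^(N-2-m) := by
    have := tele (N-1) t1 ht10 ht1N x y
    have hK1 : (N-1)+1 = N := by omega
    rw [hK1] at this
    calc ∑ m ∈ range N, g m * x^m * y^(N-1-m)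
        = ∑ m ∈ range N, (t1 m - t1 (m+1)) * x^m * y^((N-1)-m) := by
          refine Finset.sum_congr rfl fun m hm => ?_
          rw [mem_range] at hm
          rw [ht1step m hm]
      _ = (x - y) * ∑ m ∈ range (N-1), t1 (m+1) * x^m * y^((N-1)-1-m) := this
      _ = (x - y) * ∑ m ∈ range (N-1), qc a b m * x^m * y^(N-2-m) := by
          congr 1
          refine Finset.sum_congr rfl fun m hm => ?_
          rw [mem_range] at hm
          rw [ht1q m hm]
          congr 2
  -- first division: F = (x-y) * G
  set t2 : ℕ → ℝ := fun m => if 1 ≤ m ∧ m ≤ N then g (m-1) else 0 with ht2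
  have ht20 : t2 0 = 0 := by rw [ht2]; simp
  have ht2N : t2 (N+1) = 0 := by rw [ht2]; simp
  have claim1 : ∑ m ∈ range (N+1), (t2 m - t2 (m+1)) * x^m * y^(N-m)
      = (x - y) * ∑ m ∈ range N, g m * x^m * y^(N-1-m) := by
    have := tele N t2 ht20 ht2N x y
    rw [this]
    congr 1
    refine Finset.sum_congr rfl fun m hm => ?_
    rw [mem_range] at hm
    have : t2 (m+1) = g m := by
      rw [ht2]; simp only []
      rw [if_pos ⟨by omega, by omega⟩]
      simp
    rw [this]
  -- the three-term sum
  have claimF : ∑ m ∈ range (N+1), (t2 m - t2 (m+1)) * x^m * y^(N-m)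
      = (a:ℝ) * x^N + (b:ℝ) * y^N - (N:ℝ) * x^a * y^b := by
    have hsub : ({0, a, N} : Finset ℕ) ⊆ range (N+1) := by
      intro m hm
      simp only [Finset.mem_insert, Finset.mem_singleton] at hm
      rw [mem_range]; rcases hm with h|h|h <;> omega
    have hzero : ∀ m ∈ range (N+1), m ∉ ({0, a, N} : Finset ℕ) →
        (t2 m - t2 (m+1)) * x^m * y^(N-m) = 0 := by
      intro m hm hnot
      simp only [Finset.mem_insert, Finset.mem_singleton, not_or] at hnot
      obtain ⟨h0, hA, hNn⟩ := hnot
      rw [mem_range] at hm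
      have hm1 : 1 ≤ m := by omega
      have hmN : m ≤ N - 1 := by omega
      have e1 : t2 m = g (m-1) := by rw [ht2]; simp only []; rw [if_pos ⟨hm1, by omega⟩]
      have e2 : t2 (m+1) = g m := by
        rw [ht2]; simp only []; rw [if_pos ⟨by omega, by omega⟩]; simp
      rw [e1, e2, hg]; simp only []
      by_cases hma : m < a
      · rw [if_pos (by omega : m - 1 < a), if_pos hma]; ring
      · rw [if_neg (by omega : ¬ (m - 1 < a)), if_neg hma]; ring
    rw [← Finset.sum_subset hsub hzero]
    have d1 : (0:ℕ) ∉ ({a, N} : Finset ℕ) := by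
      simp only [Finset.mem_insert, Finset.mem_singleton]; omega
    have d2 : a ∉ ({N} : Finset ℕ) := by
      simp only [Finset.mem_singleton]; omega
    rw [Finset.sum_insert d1, Finset.sum_insert d2, Finset.sum_singleton]
    have e0 : t2 0 - t2 1 = (b:ℝ) := by
      rw [ht20, ht2]; simp only []
      rw [if_pos ⟨le_refl 1, by omega⟩]
      simp only [Nat.sub_self]
      rw [hg]; simp only []
      rw [if_pos (by omega : 0 < a)]; ring
    have ea : t2 a - t2 (a+1) = -(N:ℝ) := by
      rw [ht2]; simp only []
      rw [if_pos ⟨ha, by omega⟩, if_pos ⟨by omega, by omega⟩]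
      simp only [Nat.add_sub_cancel]
      rw [hg]; simp only []
      rw [if_pos (by omega : a - 1 < a), if_neg (lt_irrefl a), hNdef]
      push_cast; ring
    have eN : t2 N - t2 (N+1) = (a:ℝ) := by
      rw [ht2N, ht2]; simp only []
      rw [if_pos ⟨by omega, le_refl N⟩]
      rw [hg]; simp only []
      rw [if_neg (by omega : ¬ (N - 1 < a))]; ring
    rw [e0, ea, eN]
    have : N - a = b := by omega
    rw [this]
    simp only [pow_zero, Nat.sub_zero, Nat.sub_self]
    ring
  rw [← claimF, claim1, claim2]
  ring


private lemma base_case (N k : ℕ) (hN : 2 ≤ N) (n : Fin k → ℕ) (hsum : ∑ i, n i = N)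
    (hx : ∀ i, n i = 0 ∨ n i = N) :
    ∃ (p : Fin k → ℝ) (d : Fin k → Fin k → MvPolynomial (Fin k) ℝ),
      (∀ i, 0 ≤ p i) ∧ (∑ i, p i = 1) ∧
      (∀ i j, (d i j).totalDegree ≤ N - 2) ∧
      (∀ i j m, (d i j).coeff m ≤ 0) ∧
      (∀ u : Fin k → ℝ,
        ∏ i, u i ^ n i
          = ∑ i, p i * u i ^ N
            + ∑ i, ∑ j, if i < j then eval u (d i j) * (u i - u j) ^ 2 else 0) := by
  have hex : ∃ i₀, n i₀ = N := by
    by_contra h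
    push_neg at h
    have hz : ∀ i, n i = 0 := fun i => (hx i).resolve_right (h i)
    rw [Finset.sum_congr rfl (fun i _ => hz i)] at hsum
    simp at hsum; omega
  obtain ⟨i₀, hi₀⟩ := hex
  have hothers : ∀ j, j ≠ i₀ → n j = 0 := by
    intro j hj
    rcases hx j with h|h
    · exact h
    · exfalso
      have h1 : n i₀ + ∑ l ∈ univ.erase i₀, n l = N := by
        rw [Finset.add_sum_erase _ n (mem_univ i₀), hsum]
      have h2 : n j ≤ ∑ l ∈ univ.erase i₀, n l :=
        Finset.single_le_sum (fun l _ => Nat.zero_le _)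
          (Finset.mem_erase.mpr ⟨hj, mem_univ j⟩)
      omega
  refine ⟨fun l => if l = i₀ then 1 else 0, fun _ _ => 0, ?_, ?_, ?_, ?_, ?_⟩
  · intro l; simp only []; split <;> norm_num
  · simp
  · intro l l'; simp
  · intro l l' m; simp
  · intro u
    have h1 : ∏ l, u l ^ n l = u i₀ ^ N := by
      rw [← hi₀]
      exact Finset.prod_eq_single i₀ (fun j _ hj => by rw [hothers j hj, pow_zero])
        (fun h => absurd (Finset.mem_univ i₀) h)
    rw [h1]
    simp [ite_mul, Finset.sum_ite_eq']

private lemma key (N k : ℕ) (hN : 2 ≤ N) :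
    ∀ (μ : ℕ) (n : Fin k → ℕ), (∑ i, n i * (N - n i)) ≤ μ → (∑ i, n i = N) →
    ∃ (p : Fin k → ℝ) (d : Fin k → Fin k → MvPolynomial (Fin k) ℝ),
      (∀ i, 0 ≤ p i) ∧ (∑ i, p i = 1) ∧
      (∀ i j, (d i j).totalDegree ≤ N - 2) ∧
      (∀ i j m, (d i j).coeff m ≤ 0) ∧
      (∀ u : Fin k → ℝ,
        ∏ i, u i ^ n i
          = ∑ i, p i * u i ^ N
            + ∑ i, ∑ j, if i < j then eval u (d i j) * (u i - u j) ^ 2 else 0) := by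
  intro μ
  induction μ with
  | zero =>
    intro n hμ hsum
    refine base_case N k hN n hsum (fun i => ?_)
    by_contra h
    push_neg at h
    obtain ⟨h0, hNe⟩ := h
    have h1 : n i ≤ N := by
      have hle : n i ≤ ∑ l, n l := Finset.single_le_sum (f := n) (fun l _ => Nat.zero_le _) (mem_univ i)
      omega
    have hpos : 1 ≤ n i * (N - n i) :=
      Nat.one_le_iff_ne_zero.mpr (Nat.mul_ne_zero (by omega) (by omega))
    have hle : n i * (N - n i) ≤ ∑ l, n l * (N - n l) := by
      simpa using Finset.single_le_sum (f := fun l => n l * (N - n l))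
        (fun l _ => Nat.zero_le _) (mem_univ i)
    omega
  | succ μ ih =>
    intro n hμ hsum
    by_cases hx : ∃ i, 0 < n i ∧ n i < N
    case neg =>
      refine base_case N k hN n hsum (fun i => ?_)
      have h1 : n i ≤ N := by
        have hle : n i ≤ ∑ l, n l := Finset.single_le_sum (f := n) (fun l _ => Nat.zero_le _) (mem_univ i)
        omega
      by_contra h
      push_neg at h
      exact hx ⟨i, by omega, by omega⟩
    case pos =>
    obtain ⟨i, hi1, hi2⟩ := hx
    -- find a second index j with positive exponent
    have hresti : n i + ∑ l ∈ univ.erase i, n l = N := by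
      rw [Finset.add_sum_erase _ n (mem_univ i), hsum]
    have hexj : ∃ j ∈ univ.erase i, n j ≠ 0 := by
      by_contra h
      push_neg at h
      have : ∑ l ∈ univ.erase i, n l = 0 := Finset.sum_eq_zero (fun l hl => h l hl)
      omega
    obtain ⟨j, hjmem, hjne⟩ := hexj
    have hji : j ≠ i := Finset.ne_of_mem_erase hjmem
    have hij : i ≠ j := fun h => hji h.symm
    have ha : 1 ≤ n i := hi1
    have hb : 1 ≤ n j := Nat.one_le_iff_ne_zero.mpr hjne
    set S : Finset (Fin k) := (univ.erase i).erase j with hS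
    have hjmem' : j ∈ univ.erase i := hjmem
    have sum_split : ∀ (f : Fin k → ℕ), ∑ l, f l = f i + (f j + ∑ l ∈ S, f l) := by
      intro f
      rw [hS, Finset.add_sum_erase _ f hjmem', Finset.add_sum_erase _ f (mem_univ i)]
    have prod_split : ∀ (f : Fin k → ℝ), ∏ l, f l = f i * (f j * ∏ l ∈ S, f l) := by
      intro f
      rw [hS, Finset.mul_prod_erase _ f hjmem', Finset.mul_prod_erase _ f (mem_univ i)]
    have hmemS : ∀ l ∈ S, l ≠ i ∧ l ≠ j := by
      intro l hl
      rw [hS, Finset.mem_erase, Finset.mem_erase] at hl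
      exact ⟨hl.2.1, hl.1⟩
    have habN : n i + n j ≤ N := by
      have h2 : n j ≤ ∑ l ∈ univ.erase i, n l :=
        Finset.single_le_sum (f := n) (fun l _ => Nat.zero_le _) hjmem'
      omega
    have hSsum : n i + n j + ∑ l ∈ S, n l = N := by
      have hs := sum_split n
      omega
    -- the modified exponent vectors
    set n1 : Fin k → ℕ := Function.update (Function.update n j 0) i (n i + n j) with hn1
    set n2 : Fin k → ℕ := Function.update (Function.update n i 0) j (n i + n j) with hn2
    have hn1i : n1 i = n i + n j := by rw [hn1]; exact Function.update_self _ _ _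
    have hn1j : n1 j = 0 := by
      rw [hn1, Function.update_of_ne hji, Function.update_self]
    have hn1S : ∀ l ∈ S, n1 l = n l := by
      intro l hl
      obtain ⟨hli, hlj⟩ := hmemS l hl
      rw [hn1, Function.update_of_ne hli, Function.update_of_ne hlj]
    have hn2j : n2 j = n i + n j := by rw [hn2]; exact Function.update_self _ _ _
    have hn2i : n2 i = 0 := by
      rw [hn2, Function.update_of_ne hij, Function.update_self]
    have hn2S : ∀ l ∈ S, n2 l = n l := by
      intro l hl
      obtain ⟨hli, hlj⟩ := hmemS l hl
      rw [hn2, Function.update_of_ne hlj, Function.update_of_ne hli]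
    have hsum1 : ∑ l, n1 l = N := by
      have h1 : ∑ l, n1 l = (n i + n j) + (0 + ∑ l ∈ S, n l) := by
        rw [sum_split n1, hn1i, hn1j]
        congr 2
        exact Finset.sum_congr rfl hn1S
      omega
    have hsum2 : ∑ l, n2 l = N := by
      have h1 : ∑ l, n2 l = 0 + ((n i + n j) + ∑ l ∈ S, n l) := by
        rw [sum_split n2, hn2i, hn2j]
        congr 2
        exact Finset.sum_congr rfl hn2S
      omega
    -- measure decrease
    obtain ⟨c, hc⟩ : ∃ c, N = n i + n j + c := ⟨N - (n i + n j), by omega⟩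
    have keyeq : (n i + n j) * (N - (n i + n j)) + 2 * (n i * n j)
        = n i * (N - n i) + n j * (N - n j) := by
      have e1 : N - (n i + n j) = c := by omega
      have e2 : N - n i = n j + c := by omega
      have e3 : N - n j = n i + c := by omega
      rw [e1, e2, e3]; ring
    have hab1 : 1 ≤ n i * n j := Nat.one_le_iff_ne_zero.mpr (Nat.mul_ne_zero (by omega) (by omega))
    have h2meas : ∑ l, n l * (N - n l)
        = n i * (N - n i) + (n j * (N - n j) + ∑ l ∈ S, n l * (N - n l)) :=
      sum_split (fun l => n l * (N - n l))
    have hmeas1 : (∑ l, n1 l * (N - n1 l)) ≤ μ := by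
      have h1 : ∑ l, n1 l * (N - n1 l)
          = (n i + n j) * (N - (n i + n j)) + (0 * (N - 0) + ∑ l ∈ S, n l * (N - n l)) := by
        rw [sum_split (fun l => n1 l * (N - n1 l)), hn1i, hn1j]
        congr 2
        exact Finset.sum_congr rfl (fun l hl => by rw [hn1S l hl])
      have hz : 0 * (N - 0) = 0 := by omega
      rw [hz] at h1
      omega
    have hmeas2 : (∑ l, n2 l * (N - n2 l)) ≤ μ := by
      have h1 : ∑ l, n2 l * (N - n2 l)
          = 0 * (N - 0) + ((n i + n j) * (N - (n i + n j)) + ∑ l ∈ S, n l * (N - n l)) := by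
        rw [sum_split (fun l => n2 l * (N - n2 l)), hn2i, hn2j]
        congr 2
        exact Finset.sum_congr rfl (fun l hl => by rw [hn2S l hl])
      have hz : 0 * (N - 0) = 0 := by omega
      rw [hz] at h1
      omega
    obtain ⟨p1, d1, hp1nn, hp1sum, hd1deg, hd1coeff, hd1eval⟩ := ih n1 hmeas1 hsum1
    obtain ⟨p2, d2, hp2nn, hp2sum, hd2deg, hd2coeff, hd2eval⟩ := ih n2 hmeas2 hsum2
    -- weights
    have hN'pos : (0:ℝ) < ((n i + n j : ℕ) : ℝ) := by
      have : 0 < n i + n j := by omega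
      exact_mod_cast this
    have hN'ne : ((n i + n j : ℕ) : ℝ) ≠ 0 := ne_of_gt hN'pos
    set lam : ℝ := (n i : ℝ) / ((n i + n j : ℕ) : ℝ) with hlam
    set mu2 : ℝ := (n j : ℝ) / ((n i + n j : ℕ) : ℝ) with hmu2
    have hlamnn : 0 ≤ lam := div_nonneg (Nat.cast_nonneg _) (le_of_lt hN'pos)
    have hmu2nn : 0 ≤ mu2 := div_nonneg (Nat.cast_nonneg _) (le_of_lt hN'pos)
    have hlm : lam + mu2 = 1 := by
      rw [hlam, hmu2, ← add_div, ← Nat.cast_add]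
      exact div_self hN'ne
    -- the correction polynomial E
    set ev : ℕ → (Fin k →₀ ℕ) := fun m => Finsupp.equivFunOnFinite.symm
      (fun l => if l = i then m else if l = j then n i + n j - 2 - m else n l) with hev
    have hevapp : ∀ m l, ev m l
        = if l = i then m else if l = j then n i + n j - 2 - m else n l := by
      intro m l
      rw [hev]
      exact Finsupp.equivFunOnFinite_symm_apply_apply _ _
    set E : MvPolynomial (Fin k) ℝ := ∑ m ∈ range (n i + n j - 1),
      monomial (ev m) (-(qc (n i) (n j) m) / ((n i + n j : ℕ):ℝ)) with hE
    have hEcoeff : ∀ m', E.coeff m' ≤ 0 := by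
      intro m'
      rw [hE, MvPolynomial.coeff_sum]
      refine Finset.sum_nonpos (fun m hm => ?_)
      rw [MvPolynomial.coeff_monomial]
      split
      · exact div_nonpos_of_nonpos_of_nonneg (neg_nonpos.mpr (qc_nonneg _ _ _)) (le_of_lt hN'pos)
      · exact le_refl 0
    have hEdeg : E.totalDegree ≤ N - 2 := by
      rw [hE]
      refine le_trans (MvPolynomial.totalDegree_finset_sum _ _) (Finset.sup_le fun m hm => ?_)
      refine le_trans (MvPolynomial.totalDegree_monomial_le _ _) ?_
      rw [mem_range] at hm
      have hs : ((ev m).sum fun _ e => e) = ∑ l, ev m l :=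
        Finsupp.sum_fintype _ _ (fun _ => rfl)
      have hs2 : ∑ l, ev m l = m + ((n i + n j - 2 - m) + ∑ l ∈ S, n l) := by
        rw [sum_split (fun l => ev m l)]
        have e1 : ev m i = m := by rw [hevapp]; rw [if_pos rfl]
        have e2 : ev m j = n i + n j - 2 - m := by
          rw [hevapp, if_neg hji, if_pos rfl]
        have e3 : ∑ l ∈ S, ev m l = ∑ l ∈ S, n l := by
          refine Finset.sum_congr rfl (fun l hl => ?_)
          obtain ⟨hli, hlj⟩ := hmemS l hl
          rw [hevapp, if_neg hli, if_neg hlj]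
        rw [e1, e2, e3]
      show ((ev m).sum fun _ e => e) ≤ N - 2
      rw [hs, hs2]
      omega
    have hEeval : ∀ u : Fin k → ℝ, eval u E
        = -(1/((n i + n j : ℕ):ℝ)) * (∑ m ∈ range (n i + n j - 1),
            qc (n i) (n j) m * (u i)^m * (u j)^(n i + n j - 2 - m)) * ∏ l ∈ S, u l ^ n l := by
      intro u
      rw [hE, map_sum]
      rw [mul_comm (-(1/((n i + n j : ℕ):ℝ))) _, Finset.sum_mul, Finset.sum_mul]
      refine Finset.sum_congr rfl (fun m hm => ?_)
      rw [eval_monomial]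
      have hprod : ((ev m).prod fun l e => u l ^ e) = ∏ l, u l ^ ev m l :=
        Finsupp.prod_fintype _ _ (fun l => pow_zero (u l))
      rw [hprod, prod_split (fun l => u l ^ ev m l)]
      have e1 : u i ^ ev m i = u i ^ m := by rw [hevapp, if_pos rfl]
      have e2 : u j ^ ev m j = u j ^ (n i + n j - 2 - m) := by
        rw [hevapp, if_neg hji, if_pos rfl]
      have e3 : ∏ l ∈ S, u l ^ ev m l = ∏ l ∈ S, u l ^ n l := by
        refine Finset.prod_congr rfl (fun l hl => ?_)
        obtain ⟨hli, hlj⟩ := hmemS l hl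
        rw [hevapp, if_neg hli, if_neg hlj]
      rw [e1, e2, e3]
      ring
    -- the core identity
    have hcore : ∀ u : Fin k → ℝ, ∏ l, u l ^ n l
        = lam * ∏ l, u l ^ n1 l + mu2 * ∏ l, u l ^ n2 l + eval u E * (u i - u j)^2 := by
      intro u
      have htv := two_var (n i) (n j) ha hb (u i) (u j)
      have e1 : ∏ l, u l ^ n l = u i ^ n i * (u j ^ n j * ∏ l ∈ S, u l ^ n l) :=
        prod_split (fun l => u l ^ n l)
      have e2 : ∏ l, u l ^ n1 l = u i ^ (n i + n j) * (1 * ∏ l ∈ S, u l ^ n l) := by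
        rw [prod_split (fun l => u l ^ n1 l), hn1i, hn1j, pow_zero]
        congr 2
        exact Finset.prod_congr rfl (fun l hl => by rw [hn1S l hl])
      have e3 : ∏ l, u l ^ n2 l = 1 * (u j ^ (n i + n j) * ∏ l ∈ S, u l ^ n l) := by
        rw [prod_split (fun l => u l ^ n2 l), hn2i, hn2j, pow_zero]
        congr 2
        exact Finset.prod_congr rfl (fun l hl => by rw [hn2S l hl])
      have hNN : ((n i + n j:ℕ):ℝ) * (((n i + n j:ℕ):ℝ))⁻¹ = 1 := mul_inv_cancel₀ hN'ne
      rw [e1, e2, e3, hEeval u, hlam, hmu2]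
      linear_combination (-(1/((n i + n j:ℕ):ℝ)) * (∏ l ∈ S, u l ^ n l)) * htv
        - (u i ^ n i * u j ^ n j * ∏ l ∈ S, u l ^ n l) * hNN
    -- ordered pair for placing E
    obtain ⟨lo, hi', hlo, hset⟩ : ∃ lo hi', lo < hi' ∧ ((lo = i ∧ hi' = j) ∨ (lo = j ∧ hi' = i)) := by
      rcases lt_or_gt_of_ne hij with h|h
      · exact ⟨i, j, h, Or.inl ⟨rfl, rfl⟩⟩
      · exact ⟨j, i, h, Or.inr ⟨rfl, rfl⟩⟩
    have sqeq : ∀ u : Fin k → ℝ, (u lo - u hi')^2 = (u i - u j)^2 := by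
      intro u
      rcases hset with ⟨h1, h2⟩|⟨h1, h2⟩ <;> subst h1 <;> subst h2 <;> ring
    refine ⟨fun l => lam * p1 l + mu2 * p2 l,
      fun l l' => C lam * d1 l l' + C mu2 * d2 l l' + (if l = lo ∧ l' = hi' then E else 0),
      ?_, ?_, ?_, ?_, ?_⟩
    · intro l
      exact add_nonneg (mul_nonneg hlamnn (hp1nn l)) (mul_nonneg hmu2nn (hp2nn l))
    · rw [Finset.sum_add_distrib, ← Finset.mul_sum, ← Finset.mul_sum, hp1sum, hp2sum,
        mul_one, mul_one, hlm]
    · intro l l'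
      refine le_trans (MvPolynomial.totalDegree_add _ _) (max_le (le_trans (MvPolynomial.totalDegree_add _ _) (max_le ?_ ?_)) ?_)
      · exact le_trans (by rw [MvPolynomial.C_mul']; exact MvPolynomial.totalDegree_smul_le _ _) (hd1deg l l')
      · exact le_trans (by rw [MvPolynomial.C_mul']; exact MvPolynomial.totalDegree_smul_le _ _) (hd2deg l l')
      · split
        · exact hEdeg
        · simp
    · intro l l' m'
      rw [MvPolynomial.coeff_add, MvPolynomial.coeff_add, MvPolynomial.coeff_C_mul,
        MvPolynomial.coeff_C_mul]
      have h3 : MvPolynomial.coeff m' (if l = lo ∧ l' = hi' then E else 0) ≤ 0 := by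
        split
        · exact hEcoeff m'
        · simp
      exact add_nonpos (add_nonpos (mul_nonpos_iff.mpr (Or.inl ⟨hlamnn, hd1coeff l l' m'⟩))
        (mul_nonpos_iff.mpr (Or.inl ⟨hmu2nn, hd2coeff l l' m'⟩))) h3
    · intro u
      have hA1 : ∑ l, (lam * p1 l + mu2 * p2 l) * u l ^ N
          = lam * ∑ l, p1 l * u l ^ N + mu2 * ∑ l, p2 l * u l ^ N := by
        rw [Finset.mul_sum, Finset.mul_sum, ← Finset.sum_add_distrib]
        exact Finset.sum_congr rfl (fun l _ => by ring)
      have hA2 : ∀ l l', (if l < l' then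
            eval u (C lam * d1 l l' + C mu2 * d2 l l' + (if l = lo ∧ l' = hi' then E else 0)) * (u l - u l')^2 else 0)
          = lam * (if l < l' then eval u (d1 l l') * (u l - u l')^2 else 0)
            + mu2 * (if l < l' then eval u (d2 l l') * (u l - u l')^2 else 0)
            + (if l = lo ∧ l' = hi' then eval u E * (u l - u l')^2 else 0) := by
        intro l l'
        by_cases h : l < l'
        · rw [if_pos h, if_pos h, if_pos h]
          by_cases h2 : l = lo ∧ l' = hi'
          · rw [if_pos h2, if_pos h2]
            simp only [map_add, map_mul, eval_C]
            ring
          · rw [if_neg h2, if_neg h2]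
            simp only [map_add, map_mul, eval_C, map_zero]
            ring
        · rw [if_neg h, if_neg h, if_neg h]
          have h2 : ¬(l = lo ∧ l' = hi') := by
            rintro ⟨rfl, rfl⟩
            exact h hlo
          rw [if_neg h2]
          ring
      have hA3 : ∑ l, ∑ l', (if l = lo ∧ l' = hi' then eval u E * (u l - u l')^2 else 0)
          = eval u E * (u lo - u hi')^2 := by
        have hinner : ∀ l, (∑ l', if l = lo ∧ l' = hi' then eval u E * (u l - u l')^2 else 0)
            = if l = lo then eval u E * (u l - u hi')^2 else 0 := by
          intro l
          by_cases h : l = lo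
          · rw [if_pos h]
            have : ∀ l', (if l = lo ∧ l' = hi' then eval u E * (u l - u l')^2 else 0)
                = if l' = hi' then eval u E * (u l - u l')^2 else 0 := by
              intro l'
              by_cases h2 : l' = hi' <;> simp [h, h2]
            rw [Finset.sum_congr rfl (fun l' _ => this l'), Finset.sum_ite_eq' univ hi'
              (fun l' => eval u E * (u l - u l')^2), if_pos (mem_univ hi')]
          · rw [if_neg h]
            refine Finset.sum_eq_zero (fun l' _ => ?_)
            rw [if_neg (fun hc => h hc.1)]
        rw [Finset.sum_congr rfl (fun l _ => hinner l), Finset.sum_ite_eq' univ lo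
          (fun l => eval u E * (u l - u hi')^2), if_pos (mem_univ lo)]
      have hsplit2 : ∑ l, ∑ l', (if l < l' then
            eval u (C lam * d1 l l' + C mu2 * d2 l l' + (if l = lo ∧ l' = hi' then E else 0)) * (u l - u l')^2 else 0)
          = lam * (∑ l, ∑ l', if l < l' then eval u (d1 l l') * (u l - u l')^2 else 0)
            + mu2 * (∑ l, ∑ l', if l < l' then eval u (d2 l l') * (u l - u l')^2 else 0)
            + eval u E * (u lo - u hi')^2 := by
        rw [← hA3, Finset.mul_sum, Finset.mul_sum, ← Finset.sum_add_distrib, ← Finset.sum_add_distrib]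
        refine Finset.sum_congr rfl (fun l _ => ?_)
        rw [Finset.mul_sum, Finset.mul_sum, ← Finset.sum_add_distrib, ← Finset.sum_add_distrib]
        exact Finset.sum_congr rfl (fun l' _ => hA2 l l')
      rw [hA1, hsplit2, sqeq u, hcore u, hd1eval u, hd2eval u]
      ring

/-- Every monomial `u_1^{n_1} ⋯ u_k^{n_k}` of total degree `N ≥ 2` (all `n_i ≥ 1`) is a
convex combination of the pure powers `u_i^N` plus a sum of gradient-squared terms whose
polynomial coefficients have degree `N−2` and nonpositive coefficients. -/
theorem monomial_gradient_decomposition (N k : ℕ) (hN : 2 ≤ N) (n : Fin k → ℕ)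
    (hn : ∀ i, 1 ≤ n i) (hsum : ∑ i, n i = N) :
    ∃ (p : Fin k → ℝ) (d : Fin k → Fin k → MvPolynomial (Fin k) ℝ),
      (∀ i, 0 ≤ p i) ∧ (∑ i, p i = 1) ∧
      (∀ i j, (d i j).totalDegree ≤ N - 2) ∧
      (∀ i j m, (d i j).coeff m ≤ 0) ∧
      (∀ u : Fin k → ℝ,
        ∏ i, u i ^ n i
          = ∑ i, p i * u i ^ N
            + ∑ i, ∑ j, if i < j then
                MvPolynomial.eval u (d i j) * (u i - u j) ^ 2 else 0) := by
  exact key N k hN (∑ i, n i * (N - n i)) n le_rfl hsum
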